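/- If G is a unit disk graph with clique number ω, then FCC(G)/Ind(G) ≤ ω + 1. -/

import Mathlib

open Finset

variable {V : Type} [Fintype V] [DecidableEq V]

/-- Fractional vertex cover LP value. -/
noncomputable def FVC (G : SimpleGraph V) : ℝ :=
  sInf {s : ℝ | ∃ x : V → ℝ, (∀ v, 0 ≤ x v ∧ x v ≤ 1) ∧
    (∀ u v, G.Adj u v → 1 ≤ x u + x v) ∧ s = ∑ v, x v}

/-- Fractional matching LP value. -/
noncomputable def FMM (G : SimpleGraph V) [DecidableRel G.Adj] : ℝ :=
  sSup {s : ℝ | ∃ y : Sym2 V → ℝ, (∀ e, 0 ≤ y e ∧ y e ≤ 1) ∧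
    (∀ v : V, ∑ e ∈ G.edgeFinset, (if v ∈ e then y e else 0) ≤ 1) ∧
    s = ∑ e ∈ G.edgeFinset, y e}

/-- Fractional clique packing LP value. -/
noncomputable def FCP (G : SimpleGraph V) : ℝ :=
  sSup {s : ℝ | ∃ x : Finset V → ℝ, (∀ C, 0 ≤ x C ∧ x C ≤ 1) ∧
    (∀ C : Finset V, ¬ G.IsClique (C : Set V) → x C = 0) ∧
    (∀ v : V, ∑ C : Finset V, (if v ∈ C then x C else 0) ≤ 1) ∧
    s = ∑ C : Finset V, x C * ((C.card : ℝ) - 1)}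

/-- Fractional clique cover LP value. -/
noncomputable def FCC (G : SimpleGraph V) : ℝ :=
  sInf {s : ℝ | ∃ y : Finset V → ℝ, (∀ C, 0 ≤ y C ∧ y C ≤ 1) ∧
    (∀ C : Finset V, ¬ G.IsClique (C : Set V) → y C = 0) ∧
    (∀ v : V, 1 ≤ ∑ C : Finset V, (if v ∈ C then y C else 0)) ∧
    s = ∑ C : Finset V, y C}

/-- Maximum independent set size. -/
noncomputable def alphaNum (G : SimpleGraph V) : ℕ :=
  sSup {k : ℕ | ∃ S : Finset V,
    ((S : Set V).Pairwise fun u v => ¬ G.Adj u v) ∧ S.card = k}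

/-- Clique number. -/
noncomputable def cliqueNum (G : SimpleGraph V) : ℕ :=
  sSup {k : ℕ | ∃ C : Finset V, G.IsNClique k C}

/-- Edge-and-small-clique constrained fractional independent set LP value `α_{Fk}`. -/
noncomputable def alphaF (G : SimpleGraph V) (k : ℕ) : ℝ :=
  sSup {s : ℝ | ∃ x : V → ℝ, (∀ v, 0 ≤ x v ∧ x v ≤ 1) ∧
    (∀ C : Finset V, G.IsClique (C : Set V) → C.card ≤ k → ∑ v ∈ C, x v ≤ 1) ∧
    s = ∑ v, x v}

/-- Minimum vertex cover size. -/
noncomputable def VC (G : SimpleGraph V) : ℕ :=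
  sInf {k : ℕ | ∃ S : Finset V,
    (∀ u v, G.Adj u v → u ∈ S ∨ v ∈ S) ∧ S.card = k}

/-- Storage capacity. -/
noncomputable def Cap (G : SimpleGraph V) : ℝ :=
  sSup {x : ℝ | ∃ q : ℕ, 2 ≤ q ∧ ∃ C : Finset (V → Fin q),
    (∀ v : V, ∃ f : ({u : V // G.Adj v u} → Fin q) → Fin q,
      ∀ c ∈ C, f (fun u => c u.1) = c v) ∧
    x = Real.logb q C.card}

/-- Index coding broadcast rate over alphabet of size `q`. -/
noncomputable def IndQ (G : SimpleGraph V) (q : ℕ) : ℕ :=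
  sInf {l : ℕ | ∃ f : (V → Fin q) → (Fin l → Fin q), ∀ v : V,
    ∃ g : (Fin l → Fin q) → ({u : V // G.Adj v u} → Fin q) → Fin q,
      ∀ p : V → Fin q, g (f p) (fun u => p u.1) = p v}

/-- Index coding broadcast rate. -/
noncomputable def Ind (G : SimpleGraph V) : ℝ :=
  sInf {x : ℝ | ∃ q : ℕ, 2 ≤ q ∧ x = IndQ G q}


lemma sqrt_aux {p r : ℝ} (hp : 0 ≤ p) (hr : 0 ≤ r) (h : 3 * r^2 ≤ 4 * p^2) :
    Real.sqrt 3 * r ≤ 2 * p := by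
  nlinarith [Real.sq_sqrt (by norm_num : (3:ℝ) ≥ 0 ).le, Real.sqrt_nonneg 3,
    sq_nonneg (2*p - Real.sqrt 3 * r), sq_nonneg (2*p + Real.sqrt 3 * r)]

lemma abs_aux {q r : ℝ} (hr : 0 ≤ r) (h : 4 * q^2 ≤ r^2) : 2 * |q| ≤ r := by
  have h1 : |q| ^ 2 = q ^ 2 := sq_abs q
  nlinarith [abs_nonneg q]

lemma rr_aux {r₁ r₂ : ℝ} (h1 : 0 ≤ r₁) (h2 : 0 ≤ r₂) (h3 : r₁ ≤ 2) (h4 : r₂ ≤ 2) :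
    r₁^2 + r₂^2 - r₁*r₂ ≤ 4 := by
  rcases le_total r₁ r₂ with h | h
  · nlinarith [mul_nonneg h1 (sub_nonneg.2 h)]
  · nlinarith [mul_nonneg h2 (sub_nonneg.2 h)]

set_option maxHeartbeats 1000000 in
lemma sector_close (m₀ m₁ a₁ b₁ a₂ b₂ : ℝ) (hm : m₀^2 + m₁^2 = 4)
    (h1 : a₁^2 + b₁^2 ≤ 4) (h2 : a₂^2 + b₂^2 ≤ 4)
    (t1 : 0 ≤ a₁*m₀ + b₁*m₁) (t1' : 3*(a₁^2+b₁^2) ≤ (a₁*m₀ + b₁*m₁)^2)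
    (t2 : 0 ≤ a₂*m₀ + b₂*m₁) (t2' : 3*(a₂^2+b₂^2) ≤ (a₂*m₀ + b₂*m₁)^2) :
    (a₁-a₂)^2 + (b₁-b₂)^2 ≤ 4 := by
  set r₁ := Real.sqrt (a₁^2 + b₁^2) with hr₁def
  set r₂ := Real.sqrt (a₂^2 + b₂^2) with hr₂def
  have hr₁ : 0 ≤ r₁ := Real.sqrt_nonneg _
  have hr₂ : 0 ≤ r₂ := Real.sqrt_nonneg _
  have hr₁sq : r₁^2 = a₁^2 + b₁^2 := Real.sq_sqrt (by positivity)
  have hr₂sq : r₂^2 = a₂^2 + b₂^2 := Real.sq_sqrt (by positivity)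
  have hr₁le : r₁ ≤ 2 := by
    rw [hr₁def, show (2:ℝ) = Real.sqrt 4 by rw [show (4:ℝ) = 2^2 by norm_num, Real.sqrt_sq]; norm_num]
    exact Real.sqrt_le_sqrt h1
  have hr₂le : r₂ ≤ 2 := by
    rw [hr₂def, show (2:ℝ) = Real.sqrt 4 by rw [show (4:ℝ) = 2^2 by norm_num, Real.sqrt_sq]; norm_num]
    exact Real.sqrt_le_sqrt h2
  -- components along m and perpendicular
  set p₁ := (a₁*m₀ + b₁*m₁)/2 with hp₁def
  set p₂ := (a₂*m₀ + b₂*m₁)/2 with hp₂def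
  set q₁ := (a₁*m₁ - b₁*m₀)/2 with hq₁def
  set q₂ := (a₂*m₁ - b₂*m₀)/2 with hq₂def
  have hsum1 : p₁^2 + q₁^2 = r₁^2 := by
    rw [hr₁sq, hp₁def, hq₁def, show ((a₁*m₀ + b₁*m₁)/2)^2 + ((a₁*m₁ - b₁*m₀)/2)^2 = (a₁^2+b₁^2)*(m₀^2+m₁^2)/4 by ring, hm]; ring
  have hsum2 : p₂^2 + q₂^2 = r₂^2 := by
    rw [hr₂sq, hp₂def, hq₂def, show ((a₂*m₀ + b₂*m₁)/2)^2 + ((a₂*m₁ - b₂*m₀)/2)^2 = (a₂^2+b₂^2)*(m₀^2+m₁^2)/4 by ring, hm]; ring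
  have hinner : p₁*p₂ + q₁*q₂ = a₁*a₂ + b₁*b₂ := by
    rw [hp₁def, hq₁def, hp₂def, hq₂def,
      show (a₁*m₀ + b₁*m₁)/2*((a₂*m₀ + b₂*m₁)/2) + (a₁*m₁ - b₁*m₀)/2*((a₂*m₁ - b₂*m₀)/2) = (a₁*a₂ + b₁*b₂)*(m₀^2+m₁^2)/4 by ring, hm]; ring
  have e1 : a₁*m₀ + b₁*m₁ = 2*p₁ := by rw [hp₁def]; ring
  have e2 : a₂*m₀ + b₂*m₁ = 2*p₂ := by rw [hp₂def]; ring
  have e1sq : (a₁*m₀ + b₁*m₁)^2 = 4*p₁^2 := by rw [e1]; ring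
  have e2sq : (a₂*m₀ + b₂*m₁)^2 = 4*p₂^2 := by rw [e2]; ring
  have P1 : 3 * r₁^2 ≤ 4 * p₁^2 := by rw [hr₁sq, ← e1sq]; exact t1'
  have P2 : 3 * r₂^2 ≤ 4 * p₂^2 := by rw [hr₂sq, ← e2sq]; exact t2'
  have hp₁ : Real.sqrt 3 * r₁ ≤ 2 * p₁ := sqrt_aux (by linarith) hr₁ P1
  have hp₂ : Real.sqrt 3 * r₂ ≤ 2 * p₂ := sqrt_aux (by linarith) hr₂ P2
  have hq₁' : 2 * |q₁| ≤ r₁ := by apply abs_aux hr₁; linarith [hsum1, P1]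
  have hq₂' : 2 * |q₂| ≤ r₂ := by apply abs_aux hr₂; linarith [hsum2, P2]
  have hs3 : Real.sqrt 3 ^ 2 = 3 := Real.sq_sqrt (by norm_num)
  have hs3n : 0 ≤ Real.sqrt 3 := Real.sqrt_nonneg 3
  have hkey : r₁ * r₂ / 2 ≤ a₁*a₂ + b₁*b₂ := by
    have hqq : (2*|q₁|) * (2*|q₂|) ≤ r₁ * r₂ := mul_le_mul hq₁' hq₂' (by positivity) hr₁
    have habs : |q₁ * q₂| ≤ r₁ * r₂ / 4 := by rw [abs_mul]; linarith
    have hq : -(r₁ * r₂ / 4) ≤ q₁ * q₂ := by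
      have := neg_abs_le (q₁ * q₂); linarith
    have hpp : (Real.sqrt 3 * r₁) * (Real.sqrt 3 * r₂) ≤ (2*p₁) * (2*p₂) := by
      apply mul_le_mul hp₁ hp₂ (by positivity) (by linarith [mul_nonneg hs3n hr₁])
    have hid : (Real.sqrt 3 * r₁) * (Real.sqrt 3 * r₂) = Real.sqrt 3 ^2 * (r₁ * r₂) := by ring
    rw [hid, hs3] at hpp
    have hpp' : 3 * (r₁ * r₂) ≤ 4 * (p₁ * p₂) := by linarith
    linarith [hinner, hpp', hq]
  have expand : (a₁-a₂)^2 + (b₁-b₂)^2 = (a₁^2+b₁^2) + (a₂^2+b₂^2) - 2*(a₁*a₂+b₁*b₂) := by ring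
  have hrr : r₁^2 + r₂^2 - r₁*r₂ ≤ 4 := rr_aux hr₁ hr₂ hr₁le hr₂le
  rw [expand, ← hr₁sq, ← hr₂sq]
  linarith [hkey]

lemma sector_cover (a b : ℝ) (ha : 0 ≤ a) :
    ∃ m : ℝ × ℝ, (m = (2,0) ∨ m = (1, Real.sqrt 3) ∨ m = (1, -Real.sqrt 3)) ∧
      0 ≤ a*m.1 + b*m.2 ∧ 3*(a^2+b^2) ≤ (a*m.1 + b*m.2)^2 := by
  have hs3 : Real.sqrt 3 ^ 2 = 3 := Real.sq_sqrt (by norm_num)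
  have hs3n : 0 ≤ Real.sqrt 3 := Real.sqrt_nonneg 3
  rcases le_or_gt (3*b^2) (a^2) with h | h
  · exact ⟨(2,0), Or.inl rfl, by simpa using by positivity, by simp; nlinarith⟩
  · rcases le_or_gt 0 b with hb | hb
    · refine ⟨(1, Real.sqrt 3), Or.inr (Or.inl rfl), ?_, ?_⟩
      · simp only; positivity
      · have hab : a ≤ Real.sqrt 3 * b := by
          have h1 : a ≤ Real.sqrt (3*b^2) := by
            rw [← Real.sqrt_sq ha]; exact Real.sqrt_le_sqrt (by nlinarith)
          rwa [Real.sqrt_mul (by norm_num) (b^2), Real.sqrt_sq hb] at h1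
        simp only; nlinarith [mul_nonneg ha (sub_nonneg.2 hab)]
    · have hab : a ≤ Real.sqrt 3 * (-b) := by
        have h1 : a ≤ Real.sqrt (3*(-b)^2) := by
          rw [← Real.sqrt_sq ha]; exact Real.sqrt_le_sqrt (by nlinarith)
        rwa [Real.sqrt_mul (by norm_num) ((-b)^2), Real.sqrt_sq (by linarith)] at h1
      refine ⟨(1, -Real.sqrt 3), Or.inr (Or.inr rfl), ?_, ?_⟩
      · simp only; nlinarith
      · simp only; nlinarith [mul_nonneg ha (sub_nonneg.2 hab)]

lemma dist_le_two_iff (x y : EuclideanSpace ℝ (Fin 2)) :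
    dist x y ≤ 2 ↔ (x 0 - y 0)^2 + (x 1 - y 1)^2 ≤ 4 := by
  rw [EuclideanSpace.dist_eq, Fin.sum_univ_two]
  rw [show (2:ℝ) = Real.sqrt 4 by rw [show (4:ℝ) = 2^2 by norm_num, Real.sqrt_sq]; norm_num]
  rw [Real.sqrt_le_sqrt_iff (by norm_num)]
  simp [Real.dist_eq, sq_abs]

lemma cover_exists (G : SimpleGraph V) (c : V → EuclideanSpace ℝ (Fin 2))
    (hG : ∀ u v, G.Adj u v ↔ u ≠ v ∧ dist (c u) (c v) ≤ 2) (A : Finset V) :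
    ∃ (L : List (Finset V)) (S : Finset V),
      (∀ C ∈ L, G.IsClique (C : Set V)) ∧
      (∀ a ∈ A, ∃ C ∈ L, a ∈ C) ∧
      ((S : Set V).Pairwise fun u v => ¬ G.Adj u v) ∧ S ⊆ A ∧
      L.length ≤ 3 * S.card := by
  classical
  induction A using Finset.strongInductionOn with
  | _ A ih =>
  rcases A.eq_empty_or_nonempty with rfl | hA
  · exact ⟨[], ∅, by simp, by simp, by simp, by simp, by simp⟩
  obtain ⟨v, hvA, hvmin⟩ := A.exists_min_image (fun u => c u 0) hA
  set N := A.filter (fun u => dist (c v) (c u) ≤ 2) with hN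
  have hvN : v ∈ N := by simp [hN, hvA]
  have hvnotsd : v ∉ A \ N := by simp [Finset.mem_sdiff, hvN]
  have hAN : A \ N ⊂ A :=
    (Finset.ssubset_iff_of_subset Finset.sdiff_subset).2 ⟨v, hvA, hvnotsd⟩
  obtain ⟨L', S', hL'c, hL'cov, hS'ind, hS'sub, hlen'⟩ := ih _ hAN
  set t : ℝ × ℝ → V → ℝ :=
    fun m u => (c u 0 - c v 0) * m.1 + (c u 1 - c v 1) * m.2 with ht
  set sec : ℝ × ℝ → Finset V := fun m => N.filter (fun u =>
      0 ≤ t m u ∧ 3 * ((c u 0 - c v 0)^2 + (c u 1 - c v 1)^2) ≤ (t m u)^2) with hsec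
  set ms : List (ℝ × ℝ) := [(2,0), (1, Real.sqrt 3), (1, -Real.sqrt 3)] with hms
  have hmsnorm : ∀ m ∈ ms, m.1^2 + m.2^2 = 4 := by
    intro m hm
    have hs3 : Real.sqrt 3 ^ 2 = 3 := Real.sq_sqrt (by norm_num)
    rcases (by simpa [hms] using hm : m = (2,0) ∨ m = (1, Real.sqrt 3) ∨ m = (1, -Real.sqrt 3)) with rfl | rfl | rfl
    · norm_num
    · simp [hs3]; norm_num
    · simp [hs3]; norm_num
  have hNdist : ∀ u ∈ N, (c u 0 - c v 0)^2 + (c u 1 - c v 1)^2 ≤ 4 := by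
    intro u hu
    have := (Finset.mem_filter.1 hu).2
    rw [dist_comm] at this
    exact (dist_le_two_iff (c u) (c v)).1 this
  refine ⟨ms.map sec ++ L', insert v S', ?_, ?_, ?_, ?_, ?_⟩
  · intro C hC
    rcases List.mem_append.1 hC with hC | hC
    · obtain ⟨m, hm, rfl⟩ := List.mem_map.1 hC
      intro u hu w hw hne
      have hu' := Finset.mem_filter.1 hu
      have hw' := Finset.mem_filter.1 hw
      have hd : (c u 0 - c w 0)^2 + (c u 1 - c w 1)^2 ≤ 4 := by
        have h := sector_close m.1 m.2 (c u 0 - c v 0) (c u 1 - c v 1)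
          (c w 0 - c v 0) (c w 1 - c v 1) (hmsnorm m hm)
          (hNdist u hu'.1) (hNdist w hw'.1)
          hu'.2.1 hu'.2.2 hw'.2.1 hw'.2.2
        have e : (c u 0 - c w 0)^2 + (c u 1 - c w 1)^2 =
            ((c u 0 - c v 0) - (c w 0 - c v 0))^2 + ((c u 1 - c v 1) - (c w 1 - c v 1))^2 := by
          ring
        rw [e]; exact h
      exact (hG u w).2 ⟨hne, (dist_le_two_iff (c u) (c w)).2 hd⟩
    · exact hL'c C hC
  · intro a ha
    by_cases haN : a ∈ N
    · obtain ⟨m, hmem, hm1, hm2⟩ :=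
        sector_cover (c a 0 - c v 0) (c a 1 - c v 1) (by linarith [hvmin a ha])
      have hmms : m ∈ ms := by
        rcases hmem with rfl | rfl | rfl <;> simp [hms]
      refine ⟨sec m, List.mem_append.2 (Or.inl (List.mem_map.2 ⟨m, hmms, rfl⟩)), ?_⟩
      exact Finset.mem_filter.2 ⟨haN, hm1, hm2⟩
    · obtain ⟨C, hC, haC⟩ := hL'cov a (Finset.mem_sdiff.2 ⟨ha, haN⟩)
      exact ⟨C, List.mem_append.2 (Or.inr hC), haC⟩
  · rw [Finset.coe_insert]
    have hsym : Symmetric (fun u w => ¬ G.Adj u w) := fun x y h hadj => h hadj.symm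
    haveI : Std.Symm (fun u w => ¬ G.Adj u w) := ⟨fun a b h => hsym h⟩
    rw [Set.pairwise_insert_of_symm (r := fun u w => ¬ G.Adj u w)]
    refine ⟨hS'ind, ?_⟩
    intro b hbS _
    have hbA := hS'sub hbS
    have hbN : b ∉ N := (Finset.mem_sdiff.1 hbA).2
    intro hadj
    have := ((hG v b).1 hadj).2
    exact hbN (Finset.mem_filter.2 ⟨(Finset.mem_sdiff.1 hbA).1, this⟩)
  · exact Finset.insert_subset hvA (hS'sub.trans Finset.sdiff_subset)
  · have hvS' : v ∉ S' := fun h => hvnotsd (hS'sub h)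
    rw [Finset.card_insert_of_notMem hvS']
    simp only [List.length_append, List.length_map]
    have : ms.length = 3 := by simp [hms]
    omega

lemma FCC_bounds (G : SimpleGraph V) (L : List (Finset V))
    (hclique : ∀ C ∈ L, G.IsClique (C : Set V))
    (hcov : ∀ v : V, ∃ C ∈ L, v ∈ C) :
    0 ≤ FCC G ∧ FCC G ≤ (L.length : ℝ) := by
  classical
  set FS : Set ℝ := {s : ℝ | ∃ y : Finset V → ℝ, (∀ C, 0 ≤ y C ∧ y C ≤ 1) ∧
    (∀ C : Finset V, ¬ G.IsClique (C : Set V) → y C = 0) ∧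
    (∀ v : V, 1 ≤ ∑ C : Finset V, (if v ∈ C then y C else 0)) ∧
    s = ∑ C : Finset V, y C} with hFS
  have hbdd : BddBelow FS := by
    refine ⟨0, fun s hs => ?_⟩
    obtain ⟨y, hy, _, _, rfl⟩ := hs
    exact Finset.sum_nonneg fun C _ => (hy C).1
  set y : Finset V → ℝ := fun C => if C ∈ L then 1 else 0 with hy
  have hmem : (∑ C : Finset V, y C) ∈ FS := by
    refine ⟨y, ?_, ?_, ?_, rfl⟩
    · intro C; by_cases h : C ∈ L <;> simp [hy, h]
    · intro C hC
      have : C ∉ L := fun h => hC (hclique C h)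
      simp [hy, this]
    · intro v
      obtain ⟨C₀, hC₀L, hvC₀⟩ := hcov v
      have h1 : (if v ∈ C₀ then y C₀ else 0) = 1 := by simp [hy, hvC₀, hC₀L]
      calc (1:ℝ) = (if v ∈ C₀ then y C₀ else 0) := h1.symm
        _ ≤ ∑ C : Finset V, (if v ∈ C then y C else 0) := by
            apply Finset.single_le_sum (f := fun C => if v ∈ C then y C else 0)
              (fun C _ => ?_) (Finset.mem_univ C₀)
            by_cases h : v ∈ C <;> by_cases h' : C ∈ L <;> simp [hy, h, h']
  constructor
  · exact le_csInf ⟨_, hmem⟩ fun s hs => by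
      obtain ⟨y', hy', _, _, rfl⟩ := hs
      exact Finset.sum_nonneg fun C _ => (hy' C).1
  · have h1 : FCC G ≤ ∑ C : Finset V, y C := csInf_le hbdd hmem
    have h2 : ∑ C : Finset V, y C = (L.toFinset.card : ℝ) := by
      rw [hy]
      rw [Finset.sum_boole]
      congr 1
      congr 1
      ext C
      simp
    have h3 : (L.toFinset.card : ℝ) ≤ (L.length : ℝ) := by
      exact_mod_cast L.toFinset_card_le
    calc FCC G ≤ _ := h1
      _ = _ := h2
      _ ≤ _ := h3

lemma card_le_alphaNum (G : SimpleGraph V) (S : Finset V)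
    (hS : (S : Set V).Pairwise fun u v => ¬ G.Adj u v) :
    S.card ≤ alphaNum G := by
  apply le_csSup
  · refine ⟨Fintype.card V, fun k hk => ?_⟩
    obtain ⟨T, _, rfl⟩ := hk
    exact T.card_le_univ
  · exact ⟨S, hS, rfl⟩

lemma indep_card_le (G : SimpleGraph V) {q l : ℕ} (hq : 2 ≤ q)
    (hl : ∃ f : (V → Fin q) → (Fin l → Fin q), ∀ v : V,
      ∃ g : (Fin l → Fin q) → ({u : V // G.Adj v u} → Fin q) → Fin q,
        ∀ p : V → Fin q, g (f p) (fun u => p u.1) = p v)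
    {S : Finset V} (hS : (S : Set V).Pairwise fun u v => ¬ G.Adj u v) :
    S.card ≤ l := by
  classical
  obtain ⟨f, hf⟩ := hl
  let z : Fin q := ⟨0, by omega⟩
  let ext : (↥S → Fin q) → (V → Fin q) :=
    fun σ v => if h : v ∈ S then σ ⟨v, h⟩ else z
  have hinj : Function.Injective (fun σ : (↥S → Fin q) => f (ext σ)) := by
    intro σ σ' hEq
    funext v
    obtain ⟨g, hg⟩ := hf v.1
    have h1 := hg (ext σ)
    have h2 := hg (ext σ')
    have hnb : (fun u : {u // G.Adj v.1 u} => ext σ u.1) =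
        (fun u : {u // G.Adj v.1 u} => ext σ' u.1) := by
      funext u
      have huS : u.1 ∉ S := by
        intro huS
        exact hS (Finset.mem_coe.2 v.2) (Finset.mem_coe.2 huS) u.2.ne u.2
      simp only [ext, dif_neg huS]
    have hfe : f (ext σ) = f (ext σ') := hEq
    have : ext σ v.1 = ext σ' v.1 := by
      rw [← h1, ← h2, hfe, hnb]
    simpa only [ext, dif_pos v.2] using this
  have hcard := Fintype.card_le_of_injective _ hinj
  simp only [Fintype.card_fun, Fintype.card_coe, Fintype.card_fin] at hcard
  exact (Nat.pow_le_pow_iff_right (by omega : 2 ≤ q)).1 hcard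

lemma IndQ_nonempty (G : SimpleGraph V) (q : ℕ) :
    (Fintype.card V) ∈ {l : ℕ | ∃ f : (V → Fin q) → (Fin l → Fin q), ∀ v : V,
      ∃ g : (Fin l → Fin q) → ({u : V // G.Adj v u} → Fin q) → Fin q,
        ∀ p : V → Fin q, g (f p) (fun u => p u.1) = p v} := by
  refine ⟨fun p i => p ((Fintype.equivFin V).symm i), fun v => ?_⟩
  exact ⟨fun code _ => code ((Fintype.equivFin V) v), fun p => by simp⟩

lemma alphaNum_le_Ind (G : SimpleGraph V) : (alphaNum G : ℝ) ≤ Ind G := by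
  have key : ∀ q : ℕ, 2 ≤ q → alphaNum G ≤ IndQ G q := by
    intro q hq
    refine csSup_le ?_ ?_
    · exact ⟨0, ∅, by simp, by simp⟩
    rintro k ⟨S, hS, rfl⟩
    apply le_csInf ⟨_, IndQ_nonempty G q⟩
    intro l hl
    exact indep_card_le G hq hl hS
  refine le_csInf ?_ ?_
  · exact ⟨(IndQ G 2 : ℝ), 2, le_refl 2, rfl⟩
  rintro x ⟨q, hq, rfl⟩
  exact_mod_cast key q hq

lemma two_le_cliqueNum {G : SimpleGraph V} {u w : V} (h : G.Adj u w) :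
    2 ≤ cliqueNum G := by
  apply le_csSup
  · refine ⟨Fintype.card V, fun k hk => ?_⟩
    obtain ⟨C, hC⟩ := hk
    exact hC.2 ▸ C.card_le_univ
  · refine ⟨{u, w}, ?_, ?_⟩
    · intro x hx y hy hne
      simp only [Finset.coe_insert, Finset.coe_singleton, Set.mem_insert_iff,
        Set.mem_singleton_iff] at hx hy
      rcases hx with rfl | rfl <;> rcases hy with rfl | rfl
      · exact absurd rfl hne
      · exact h
      · exact h.symm
      · exact absurd rfl hne
    · rw [Finset.card_insert_of_notMem (by simp [h.ne]), Finset.card_singleton]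

lemma one_le_alphaNum (G : SimpleGraph V) (v : V) : 1 ≤ alphaNum G := by
  have := card_le_alphaNum G {v} (by simp)
  simpa using this

/-- For a unit disk graph with clique number `ω`, `FCC(G)/Ind(G) ≤ ω + 1`. -/
theorem stmt15 (G : SimpleGraph V)
    (hUDG : ∃ c : V → EuclideanSpace ℝ (Fin 2),
      ∀ u v, G.Adj u v ↔ u ≠ v ∧ dist (c u) (c v) ≤ 2) :
    FCC G / Ind G ≤ (cliqueNum G : ℝ) + 1 := by
  classical
  obtain ⟨c, hG⟩ := hUDG
  obtain ⟨L, S, hLc, hLcov, hSind, _, hlen⟩ := cover_exists G c hG Finset.univ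
  have hcov : ∀ v : V, ∃ C ∈ L, v ∈ C := fun v => hLcov v (Finset.mem_univ v)
  obtain ⟨hFCC0, hFCCle⟩ := FCC_bounds G L hLc hcov
  have hInd := alphaNum_le_Ind G
  have hSalpha : (S.card : ℝ) ≤ (alphaNum G : ℝ) := by
    exact_mod_cast card_le_alphaNum G S hSind
  by_cases hV : Nonempty V
  · obtain ⟨v₀⟩ := hV
    have halpha1 : (1 : ℝ) ≤ (alphaNum G : ℝ) := by
      exact_mod_cast one_le_alphaNum G v₀
    have hIndpos : (0 : ℝ) < Ind G := lt_of_lt_of_le one_pos (le_trans halpha1 hInd)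
    rw [div_le_iff₀ hIndpos]
    by_cases hedge : ∃ u w, G.Adj u w
    · obtain ⟨u, w, huw⟩ := hedge
      have hω : (2 : ℝ) ≤ (cliqueNum G : ℝ) := by exact_mod_cast two_le_cliqueNum huw
      have h3 : FCC G ≤ 3 * Ind G := by
        calc FCC G ≤ (L.length : ℝ) := hFCCle
          _ ≤ 3 * (S.card : ℝ) := by exact_mod_cast hlen
          _ ≤ 3 * (alphaNum G : ℝ) := by linarith
          _ ≤ 3 * Ind G := by linarith
      have : (3 : ℝ) ≤ (cliqueNum G : ℝ) + 1 := by linarith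
      calc FCC G ≤ 3 * Ind G := h3
        _ ≤ ((cliqueNum G : ℝ) + 1) * Ind G := by
            apply mul_le_mul_of_nonneg_right this (le_of_lt hIndpos)
    · push_neg at hedge
      -- no edges: use singleton cover and univ independent
      set L₁ : List (Finset V) := Finset.univ.toList.map (fun v => {v}) with hL₁
      have hL₁c : ∀ C ∈ L₁, G.IsClique (C : Set V) := by
        intro C hC
        obtain ⟨v, _, rfl⟩ := List.mem_map.1 hC
        simp [SimpleGraph.isClique_iff]
      have hL₁cov : ∀ v : V, ∃ C ∈ L₁, v ∈ C := by
        intro v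
        exact ⟨{v}, List.mem_map.2 ⟨v, by simp, rfl⟩, by simp⟩
      obtain ⟨_, hFCCle₁⟩ := FCC_bounds G L₁ hL₁c hL₁cov
      have hL₁len : (L₁.length : ℝ) = (Fintype.card V : ℝ) := by
        simp [hL₁, Finset.length_toList]
      have huniv : ((Finset.univ : Finset V) : Set V).Pairwise fun u v => ¬ G.Adj u v :=
        fun x _ y _ _ => hedge x y
      have hα : (Fintype.card V : ℝ) ≤ (alphaNum G : ℝ) := by
        have := card_le_alphaNum G Finset.univ huniv
        exact_mod_cast this
      have h1 : FCC G ≤ 1 * Ind G := by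
        rw [one_mul]
        calc FCC G ≤ (L₁.length : ℝ) := hFCCle₁
          _ = (Fintype.card V : ℝ) := hL₁len
          _ ≤ (alphaNum G : ℝ) := hα
          _ ≤ Ind G := hInd
      have hω0 : (0 : ℝ) ≤ (cliqueNum G : ℝ) := Nat.cast_nonneg _
      calc FCC G ≤ 1 * Ind G := h1
        _ ≤ ((cliqueNum G : ℝ) + 1) * Ind G := by
            apply mul_le_mul_of_nonneg_right (by linarith) (le_of_lt hIndpos)
  · -- V empty
    have hFCC : FCC G = 0 := by
      have : FCC G ≤ (0 : ℝ) := by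
        have h := (FCC_bounds G [] (by simp) (fun v => absurd ⟨v⟩ hV)).2
        simpa using h
      linarith
    rw [hFCC, zero_div]
    positivity
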